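/- Under the assumptions M ⊥ R | X, G=2 (MAR in domain 2) and M ⊥ G | X (selection at random), for every x and m: p(M=m | X=x, R=0, G=1) · p(R=0 | X=x, G=1) = p(M=m | X=x, R=1, G=2) − p(M=m, R=1 | X=x, G=1). -/

import Mathlib

open Finset Set Real

noncomputable def Pr {Ω : Type*} [Fintype Ω] (μ : Ω → ℝ) (A : Set Ω) : ℝ :=
  ∑ ω, A.indicator μ ω

noncomputable def cPr {Ω : Type*} [Fintype Ω] (μ : Ω → ℝ) (A B : Set Ω) : ℝ :=
  Pr μ (A ∩ B) / Pr μ B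

noncomputable def cE {Ω : Type*} [Fintype Ω] (μ : Ω → ℝ) (f : Ω → ℝ) (B : Set Ω) : ℝ :=
  (∑ ω, B.indicator (fun ω' => μ ω' * f ω') ω) / Pr μ B


lemma Pr_mono' {Ω : Type*} [Fintype Ω] (μ : Ω → ℝ) (hμ0 : ∀ ω, 0 ≤ μ ω)
    {A B : Set Ω} (h : A ⊆ B) : Pr μ A ≤ Pr μ B :=
  Finset.sum_le_sum fun ω _ => Set.indicator_le_indicator_of_subset h hμ0 ω

lemma Pr_congr' {Ω : Type*} [Fintype Ω] (μ : Ω → ℝ) {A B : Set Ω} (h : A = B) :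
    Pr μ A = Pr μ B := by rw [h]

lemma Pr_split' {Ω : Type*} [Fintype Ω] (μ : Ω → ℝ) (f : Ω → ℕ) (a b : ℕ) (hab : a ≠ b)
    (hf : ∀ ω, f ω = a ∨ f ω = b) (P : Ω → Prop) :
    Pr μ {ω | P ω} = Pr μ {ω | P ω ∧ f ω = a} + Pr μ {ω | P ω ∧ f ω = b} := by
  unfold Pr
  rw [← Finset.sum_add_distrib]
  refine Finset.sum_congr rfl fun ω _ => ?_
  rcases hf ω with h | h <;> by_cases hp : P ω <;>
    simp [Set.indicator_apply, Set.mem_setOf_eq, h, hp, hab, hab.symm]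

theorem stmt9
    {Ω 𝓧 𝓜 : Type*} [Fintype Ω]
    (μ : Ω → ℝ) (X : Ω → 𝓧) (M : Ω → 𝓜) (R G : Ω → ℕ)
    (hμ0 : ∀ ω, 0 ≤ μ ω) (hμ1 : ∑ ω, μ ω = 1)
    (hR : ∀ ω, R ω = 0 ∨ R ω = 1)
    (hG : ∀ ω, G ω = 1 ∨ G ω = 2)
    (hpos : ∀ x ∈ Set.range X, ∀ m ∈ Set.range M, ∀ r g : ℕ,
      (r = 0 ∨ r = 1) → (g = 1 ∨ g = 2) →
      0 < Pr μ {ω | X ω = x ∧ M ω = m ∧ R ω = r ∧ G ω = g})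
    (hMAR : ∀ (m : 𝓜) (r : ℕ) (x : 𝓧),
      0 < Pr μ {ω | X ω = x ∧ G ω = 2} →
      cPr μ {ω | M ω = m ∧ R ω = r} {ω | X ω = x ∧ G ω = 2} =
        cPr μ {ω | M ω = m} {ω | X ω = x ∧ G ω = 2} *
        cPr μ {ω | R ω = r} {ω | X ω = x ∧ G ω = 2})
    (hSel : ∀ (m : 𝓜) (g : ℕ) (x : 𝓧),
      0 < Pr μ {ω | X ω = x} →
      cPr μ {ω | M ω = m ∧ G ω = g} {ω | X ω = x} =
        cPr μ {ω | M ω = m} {ω | X ω = x} * cPr μ {ω | G ω = g} {ω | X ω = x})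
 :
    ∀ x ∈ Set.range X, ∀ m ∈ Set.range M,
      cPr μ {ω | M ω = m} {ω | X ω = x ∧ R ω = 0 ∧ G ω = 1} *
          cPr μ {ω | R ω = 0} {ω | X ω = x ∧ G ω = 1} =
        cPr μ {ω | M ω = m} {ω | X ω = x ∧ R ω = 1 ∧ G ω = 2} -
          cPr μ {ω | M ω = m ∧ R ω = 1} {ω | X ω = x ∧ G ω = 1} := by
  intro x hx m hm
  -- joint probabilities
  set a01 := Pr μ {ω | X ω = x ∧ M ω = m ∧ R ω = 0 ∧ G ω = 1} with ha01
  set a11 := Pr μ {ω | X ω = x ∧ M ω = m ∧ R ω = 1 ∧ G ω = 1} with ha11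
  set a02 := Pr μ {ω | X ω = x ∧ M ω = m ∧ R ω = 0 ∧ G ω = 2} with ha02
  set a12 := Pr μ {ω | X ω = x ∧ M ω = m ∧ R ω = 1 ∧ G ω = 2} with ha12
  set q1 := Pr μ {ω | X ω = x ∧ G ω = 1} with hq1
  set q2 := Pr μ {ω | X ω = x ∧ G ω = 2} with hq2
  set s12 := Pr μ {ω | X ω = x ∧ R ω = 1 ∧ G ω = 2} with hs12
  set t0 := Pr μ {ω | X ω = x ∧ R ω = 0 ∧ G ω = 1} with ht0
  set c := Pr μ {ω | X ω = x} with hc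
  set T := Pr μ {ω | X ω = x ∧ M ω = m} with hT
  have pa01 : 0 < a01 := hpos x hx m hm 0 1 (Or.inl rfl) (Or.inl rfl)
  have pa11 : 0 < a11 := hpos x hx m hm 1 1 (Or.inr rfl) (Or.inl rfl)
  have pa02 : 0 < a02 := hpos x hx m hm 0 2 (Or.inl rfl) (Or.inr rfl)
  have pa12 : 0 < a12 := hpos x hx m hm 1 2 (Or.inr rfl) (Or.inr rfl)
  have pq1 : 0 < q1 := lt_of_lt_of_le pa01 (Pr_mono' μ hμ0 (by intro ω hω; exact ⟨hω.1, hω.2.2.2⟩))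
  have pq2 : 0 < q2 := lt_of_lt_of_le pa02 (Pr_mono' μ hμ0 (by intro ω hω; exact ⟨hω.1, hω.2.2.2⟩))
  have ps12 : 0 < s12 := lt_of_lt_of_le pa12 (Pr_mono' μ hμ0 (by intro ω hω; exact ⟨hω.1, hω.2.2⟩))
  have pt0 : 0 < t0 := lt_of_lt_of_le pa01 (Pr_mono' μ hμ0 (by intro ω hω; exact ⟨hω.1, hω.2.2⟩))
  have pc : 0 < c := lt_of_lt_of_le pq1 (Pr_mono' μ hμ0 (by intro ω hω; exact hω.1))
  -- splits
  have sG : c = q1 + q2 := by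
    rw [hc, hq1, hq2]
    exact Pr_split' μ G 1 2 (by norm_num) hG (fun ω => X ω = x)
  have sT1 : Pr μ {ω | X ω = x ∧ M ω = m ∧ G ω = 1} = a01 + a11 := by
    rw [ha01, ha11]
    have := Pr_split' μ R 0 1 (by norm_num) hR (fun ω => X ω = x ∧ M ω = m ∧ G ω = 1)
    rw [this]
    congr 1 <;> exact Pr_congr' μ (by ext ω; simp only [Set.mem_inter_iff, Set.mem_setOf_eq]; tauto)
  have sT2 : Pr μ {ω | X ω = x ∧ M ω = m ∧ G ω = 2} = a02 + a12 := by
    rw [ha02, ha12]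
    have := Pr_split' μ R 0 1 (by norm_num) hR (fun ω => X ω = x ∧ M ω = m ∧ G ω = 2)
    rw [this]
    congr 1 <;> exact Pr_congr' μ (by ext ω; simp only [Set.mem_inter_iff, Set.mem_setOf_eq]; tauto)
  have sT : T = (a01 + a11) + (a02 + a12) := by
    rw [hT, Pr_split' μ G 1 2 (by norm_num) hG (fun ω => X ω = x ∧ M ω = m),
      Pr_congr' μ (show {ω | (X ω = x ∧ M ω = m) ∧ G ω = 1} =
        {ω | X ω = x ∧ M ω = m ∧ G ω = 1} by
          ext ω; simp only [Set.mem_setOf_eq]; tauto),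
      Pr_congr' μ (show {ω | (X ω = x ∧ M ω = m) ∧ G ω = 2} =
        {ω | X ω = x ∧ M ω = m ∧ G ω = 2} by
          ext ω; simp only [Set.mem_setOf_eq]; tauto),
      sT1, sT2]
  -- MAR instance
  have hmar := hMAR m 1 x pq2
  rw [cPr, cPr, cPr] at hmar
  rw [Pr_congr' μ (show {ω | M ω = m ∧ R ω = 1} ∩ {ω | X ω = x ∧ G ω = 2} =
      {ω | X ω = x ∧ M ω = m ∧ R ω = 1 ∧ G ω = 2} by ext ω; simp only [Set.mem_inter_iff, Set.mem_setOf_eq]; tauto),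
    Pr_congr' μ (show {ω | M ω = m} ∩ {ω | X ω = x ∧ G ω = 2} =
      {ω | X ω = x ∧ M ω = m ∧ G ω = 2} by ext ω; simp only [Set.mem_inter_iff, Set.mem_setOf_eq]; tauto),
    Pr_congr' μ (show {ω | R ω = 1} ∩ {ω | X ω = x ∧ G ω = 2} =
      {ω | X ω = x ∧ R ω = 1 ∧ G ω = 2} by ext ω; simp only [Set.mem_inter_iff, Set.mem_setOf_eq]; tauto),
    sT2] at hmar
  -- hmar : a12 / q2 = (a02 + a12) / q2 * (s12 / q2)
  have hq20 : q2 ≠ 0 := ne_of_gt pq2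
  have hc0 : c ≠ 0 := ne_of_gt pc
  have hq10 : q1 ≠ 0 := ne_of_gt pq1
  have hs0 : s12 ≠ 0 := ne_of_gt ps12
  have ht00 : t0 ≠ 0 := ne_of_gt pt0
  have hmar' : a12 * q2 = (a02 + a12) * s12 := by
    rw [div_mul_div_comm, div_eq_div_iff hq20 (mul_ne_zero hq20 hq20)] at hmar
    apply mul_right_cancel₀ hq20
    linear_combination hmar
  -- Selection instances
  have hsel1 := hSel m 1 x pc
  have hsel2 := hSel m 2 x pc
  rw [cPr, cPr, cPr,
    Pr_congr' μ (show {ω | M ω = m ∧ G ω = 1} ∩ {ω | X ω = x} =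
      {ω | X ω = x ∧ M ω = m ∧ G ω = 1} by ext ω; simp only [Set.mem_inter_iff, Set.mem_setOf_eq]; tauto),
    Pr_congr' μ (show {ω | M ω = m} ∩ {ω | X ω = x} =
      {ω | X ω = x ∧ M ω = m} by ext ω; simp only [Set.mem_inter_iff, Set.mem_setOf_eq]; tauto),
    Pr_congr' μ (show {ω | G ω = 1} ∩ {ω | X ω = x} =
      {ω | X ω = x ∧ G ω = 1} by ext ω; simp only [Set.mem_inter_iff, Set.mem_setOf_eq]; tauto),
    sT1] at hsel1
  rw [cPr, cPr, cPr,
    Pr_congr' μ (show {ω | M ω = m ∧ G ω = 2} ∩ {ω | X ω = x} =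
      {ω | X ω = x ∧ M ω = m ∧ G ω = 2} by ext ω; simp only [Set.mem_inter_iff, Set.mem_setOf_eq]; tauto),
    Pr_congr' μ (show {ω | M ω = m} ∩ {ω | X ω = x} =
      {ω | X ω = x ∧ M ω = m} by ext ω; simp only [Set.mem_inter_iff, Set.mem_setOf_eq]; tauto),
    Pr_congr' μ (show {ω | G ω = 2} ∩ {ω | X ω = x} =
      {ω | X ω = x ∧ G ω = 2} by ext ω; simp only [Set.mem_inter_iff, Set.mem_setOf_eq]; tauto),
    sT2] at hsel2
  -- hsel1 : (a01+a11)/c = T/c * (q1/c), hsel2 similarly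
  have hsel1' : (a01 + a11) * c = T * q1 := by
    rw [div_mul_div_comm, div_eq_div_iff hc0 (mul_ne_zero hc0 hc0)] at hsel1
    apply mul_right_cancel₀ hc0
    linear_combination hsel1
  have hsel2' : (a02 + a12) * c = T * q2 := by
    rw [div_mul_div_comm, div_eq_div_iff hc0 (mul_ne_zero hc0 hc0)] at hsel2
    apply mul_right_cancel₀ hc0
    linear_combination hsel2
  have key : (a01 + a11) * s12 = a12 * q1 := by
    have h := mul_pos pc pq2
    apply mul_right_cancel₀ (ne_of_gt h)
    linear_combination (s12 * q2) * hsel1' - (q1 * s12) * hsel2' - (q1 * c) * hmar'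
  -- final goal
  rw [cPr, cPr, cPr, cPr,
    Pr_congr' μ (show {ω | M ω = m} ∩ {ω | X ω = x ∧ R ω = 0 ∧ G ω = 1} =
      {ω | X ω = x ∧ M ω = m ∧ R ω = 0 ∧ G ω = 1} by ext ω; simp only [Set.mem_inter_iff, Set.mem_setOf_eq]; tauto),
    Pr_congr' μ (show {ω | R ω = 0} ∩ {ω | X ω = x ∧ G ω = 1} =
      {ω | X ω = x ∧ R ω = 0 ∧ G ω = 1} by ext ω; simp only [Set.mem_inter_iff, Set.mem_setOf_eq]; tauto),
    Pr_congr' μ (show {ω | M ω = m} ∩ {ω | X ω = x ∧ R ω = 1 ∧ G ω = 2} =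
      {ω | X ω = x ∧ M ω = m ∧ R ω = 1 ∧ G ω = 2} by ext ω; simp only [Set.mem_inter_iff, Set.mem_setOf_eq]; tauto),
    Pr_congr' μ (show {ω | M ω = m ∧ R ω = 1} ∩ {ω | X ω = x ∧ G ω = 1} =
      {ω | X ω = x ∧ M ω = m ∧ R ω = 1 ∧ G ω = 1} by ext ω; simp only [Set.mem_inter_iff, Set.mem_setOf_eq]; tauto)]
  -- goal : a01/t0 * (t0/q1) = a12/s12 - a11/q1
  rw [div_mul_div_comm, mul_comm t0 q1, mul_div_mul_right _ _ ht00,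
    eq_sub_iff_add_eq, ← add_div, div_eq_div_iff hq10 hs0]
  linear_combination key
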